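/- Let K and τ be positive integers with τ ≤ K, and let z : Fin K → ℝ satisfy z_k > 0 for all k and z_k ≤ (Σ_{j} z_j)/τ for all k. Set B = (Σ_j z_j)/τ. Then there exists a matrix Q : Matrix (Fin τ) (Fin K) ℝ whose columns q_1, …, q_K all have unit Euclidean norm and which satisfies Q · (diagonal z) · Qᵀ = B • (1 : Matrix (Fin τ) (Fin τ) ℝ). -/

import Mathlib

open Matrix Finset

lemma gwbe_aux : ∀ K τ : ℕ, τ ≤ K → ∀ B : ℝ, 0 < B → ∀ z : Fin K → ℝ,
    (∀ k, 0 < z k) → (∀ k, z k ≤ B) → (∑ k, z k) = τ * B →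
    ∃ v : Fin K → Fin τ → ℝ,
      (∀ k, ∑ i, v k i ^ 2 = z k) ∧
      (∀ i j, ∑ k, v k i * v k j = if i = j then B else 0) := by
  intro K
  induction K using Nat.strong_induction_on with
  | _ K IH =>
    intro τ hτK B hB z hz hzB hsum
    rcases eq_or_lt_of_le hτK with heq | hlt
    · -- base case: τ = K, all weights equal B
      subst heq
      have hzb : ∀ k, z k = B := by
        have h1 : ∑ k : Fin τ, (B - z k) = 0 := by
          rw [Finset.sum_sub_distrib, hsum, Finset.sum_const, Finset.card_univ,
            Fintype.card_fin, nsmul_eq_mul]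
          ring
        intro k
        have := (Finset.sum_eq_zero_iff_of_nonneg
          (fun x _ => by linarith [hzB x])).mp h1 k (Finset.mem_univ k)
        linarith
      refine ⟨fun k i => if i = k then Real.sqrt B else 0, ?_, ?_⟩
      · intro k
        have h2 : ∀ i : Fin τ, (if i = k then Real.sqrt B else 0) ^ 2
            = if i = k then B else 0 := by
          intro i; split <;> simp [Real.sq_sqrt hB.le]
        rw [Finset.sum_congr rfl fun i _ => h2 i, Finset.sum_ite_eq' Finset.univ k]
        simp [hzb k]
      · intro i j
        rw [Finset.sum_eq_single_of_mem i (Finset.mem_univ i)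
          (fun k _ hk => by simp [(Ne.symm hk : ¬ i = k)])]
        by_cases hij : i = j
        · simp [hij, Real.mul_self_sqrt hB.le]
        · have hji : ¬ j = i := fun h => hij h.symm
          simp [hij, hji]
    · -- inductive step: τ < K
      have hτpos : 0 < τ := by
        by_contra h
        have hτ0 : τ = 0 := by omega
        subst hτ0
        have : (0:ℝ) < ∑ k, z k :=
          Finset.sum_pos (fun k _ => hz k) ⟨⟨0, by omega⟩, Finset.mem_univ _⟩
        simp at hsum
        linarith
      obtain ⟨n, rfl⟩ : ∃ n, K = n + 2 := ⟨K - 2, by omega⟩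
      set a := z 0 with ha
      set b := z 1 with hb
      have hab : 0 < a + b := by have := hz 0; have := hz 1; linarith
      have hsum' : a + b + ∑ k : Fin n, z k.succ.succ = τ * B := by
        rw [← hsum, Fin.sum_univ_succ, Fin.sum_univ_succ]
        simp only [ha, hb, Fin.succ_zero_eq_one]
        ring
      by_cases hcase : a + b ≤ B
      · -- merge case
        set z' : Fin (n+1) → ℝ := Fin.cons (a + b) (fun i : Fin n => z i.succ.succ) with hz'
        have hz'pos : ∀ k, 0 < z' k := by
          intro k
          refine Fin.cases ?_ (fun i => ?_) k
          · simpa [hz'] using hab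
          · simpa [hz'] using hz i.succ.succ
        have hz'B : ∀ k, z' k ≤ B := by
          intro k
          refine Fin.cases ?_ (fun i => ?_) k
          · simpa [hz'] using hcase
          · simpa [hz'] using hzB i.succ.succ
        have hz'sum : ∑ k, z' k = τ * B := by
          rw [Fin.sum_univ_succ]
          simp only [hz', Fin.cons_zero, Fin.cons_succ]
          linarith [hsum']
        obtain ⟨w, hwn, hwf⟩ := IH (n+1) (by omega) τ (by omega) B hB z' hz'pos hz'B hz'sum
        set ca := Real.sqrt (a / (a + b)) with hca
        set cb := Real.sqrt (b / (a + b)) with hcb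
        have hca2 : ca ^ 2 = a / (a + b) := Real.sq_sqrt (div_nonneg (hz 0).le hab.le)
        have hcb2 : cb ^ 2 = b / (a + b) := Real.sq_sqrt (div_nonneg (hz 1).le hab.le)
        have hcc : ca ^ 2 + cb ^ 2 = 1 := by
          rw [hca2, hcb2]
          field_simp
        have hw0 : ∑ i, w 0 i ^ 2 = a + b := by simpa [hz'] using hwn 0
        refine ⟨Fin.cons (fun i => ca * w 0 i) (Fin.cons (fun i => cb * w 0 i)
          (fun k => w k.succ)), ?_, ?_⟩
        · intro k
          refine Fin.cases ?_ (fun j => ?_) k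
          · simp only [Fin.cons_zero]
            have hex : ∀ i : Fin τ, (ca * w 0 i) ^ 2 = ca ^ 2 * w 0 i ^ 2 :=
              fun i => by ring
            rw [Finset.sum_congr rfl fun i _ => hex i, ← Finset.mul_sum, hw0, hca2]
            rw [ha]
            exact div_mul_cancel₀ _ hab.ne'
          · simp only [Fin.cons_succ]
            refine Fin.cases ?_ (fun i => ?_) j
            · simp only [Fin.cons_zero]
              have hex : ∀ i : Fin τ, (cb * w 0 i) ^ 2 = cb ^ 2 * w 0 i ^ 2 :=
                fun i => by ring
              rw [Finset.sum_congr rfl fun i _ => hex i, ← Finset.mul_sum, hw0, hcb2]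
              rw [hb, Fin.succ_zero_eq_one]
              exact div_mul_cancel₀ _ hab.ne'
            · simp only [Fin.cons_succ]
              simpa [hz'] using hwn i.succ
        · intro i j
          rw [Fin.sum_univ_succ, Fin.sum_univ_succ]
          simp only [Fin.cons_zero, Fin.cons_succ]
          have h1 : ∑ k : Fin (n+1), w k i * w k j = if i = j then B else 0 := hwf i j
          rw [Fin.sum_univ_succ] at h1
          linear_combination h1 + (w 0 i * w 0 j) * hcc
      · -- split case
        push_neg at hcase
        obtain ⟨t, rfl⟩ : ∃ t, τ = t + 1 := ⟨τ - 1, by omega⟩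
        set c := a + b - B with hc
        have hcpos : 0 < c := by rw [hc]; linarith
        have hcB : c ≤ B := by
          have h0 := hzB 0; have h1 := hzB 1
          rw [hc]; linarith
        set z'' : Fin (n+1) → ℝ := Fin.cons c (fun i : Fin n => z i.succ.succ) with hz''
        have hz''pos : ∀ k, 0 < z'' k := by
          intro k
          refine Fin.cases ?_ (fun i => ?_) k
          · simpa [hz''] using hcpos
          · simpa [hz''] using hz i.succ.succ
        have hz''B : ∀ k, z'' k ≤ B := by
          intro k
          refine Fin.cases ?_ (fun i => ?_) k
          · simpa [hz''] using hcB
          · simpa [hz''] using hzB i.succ.succ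
        have hz''sum : ∑ k, z'' k = t * B := by
          rw [Fin.sum_univ_succ]
          simp only [hz'', Fin.cons_zero, Fin.cons_succ]
          push_cast at hsum'
          rw [hc]
          linarith
        obtain ⟨w, hwn, hwf⟩ := IH (n+1) (by omega) t (by omega) B hB z'' hz''pos hz''B hz''sum
        obtain ⟨x, y, hxy1, hxya⟩ : ∃ x y : ℝ, x^2 + y^2 = 1 ∧ x^2 * c + y^2 * B = a := by
          by_cases hr : B = c
          · refine ⟨1, 0, by ring, ?_⟩
            have h0 := hzB 0; have h1 := hzB 1
            rw [hc] at hr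
            rw [← ha] at h0
            rw [← hb] at h1
            have hbB : b = B := by linarith
            rw [hc]
            linarith
          · have hclt : c < B := lt_of_le_of_ne hcB (fun h => hr h.symm)
            have hrpos : 0 < B - c := by linarith
            have hBa : 0 ≤ B - a := by linarith [hzB 0]
            have hac : 0 ≤ a - c := by
              have h1 := hzB 1
              rw [hc]; linarith
            refine ⟨Real.sqrt ((B-a)/(B-c)), Real.sqrt ((a-c)/(B-c)), ?_, ?_⟩
            · rw [Real.sq_sqrt (by positivity), Real.sq_sqrt (by positivity)]
              field_simp; ring
            · rw [Real.sq_sqrt (by positivity), Real.sq_sqrt (by positivity)]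
              field_simp
              ring
        have hxyb : y^2 * c + x^2 * B = b := by
          have hbeq : b = c + B - a := by rw [hc]; ring
          rw [hbeq]
          linear_combination (c + B) * hxy1 - hxya
        set p : Fin (t+1) → ℝ := Fin.cons 0 (w 0) with hp
        set q : Fin (t+1) → ℝ := Fin.cons (Real.sqrt B) (fun _ => 0) with hq
        have hpp : ∑ i, p i ^ 2 = c := by
          rw [Fin.sum_univ_succ]
          simp only [hp, Fin.cons_zero, Fin.cons_succ]
          simpa [hz''] using hwn 0
        have hqq : ∑ i, q i ^ 2 = B := by
          rw [Fin.sum_univ_succ]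
          simp [hq, Real.sq_sqrt hB.le]
        have hpq : ∑ i, p i * q i = 0 := by
          rw [Fin.sum_univ_succ]
          simp [hp, hq]
        have main : ∀ i j : Fin (t+1),
            q i * q j + ∑ k : Fin (n+1), (Fin.cons (0:ℝ) (w k) : Fin (t+1) → ℝ) i * (Fin.cons (0:ℝ) (w k) : Fin (t+1) → ℝ) j
            = if i = j then B else 0 := by
          intro i j
          refine Fin.cases ?_ (fun i' => ?_) i
          · refine Fin.cases ?_ (fun j' => ?_) j
            · simp [hq, Real.mul_self_sqrt hB.le]
            · simp [hq, (Fin.succ_ne_zero j').symm]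
          · refine Fin.cases ?_ (fun j' => ?_) j
            · simp [hq, Fin.succ_ne_zero i']
            · simp only [hq, Fin.cons_succ, Fin.succ_inj]
              simpa [Fin.succ_inj] using hwf i' j'
        refine ⟨Fin.cons (fun i => x * p i + y * q i)
          (Fin.cons (fun i => y * p i - x * q i)
          (fun k : Fin n => (Fin.cons (0:ℝ) (w k.succ) : Fin (t+1) → ℝ))), ?_, ?_⟩
        · intro k
          refine Fin.cases ?_ (fun j => ?_) k
          · simp only [Fin.cons_zero]
            have hex : ∀ i : Fin (t+1), (x * p i + y * q i) ^ 2
                = x^2 * p i ^ 2 + (2*x*y) * (p i * q i) + y^2 * q i ^ 2 :=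
              fun i => by ring
            rw [Finset.sum_congr rfl fun i _ => hex i, Finset.sum_add_distrib,
              Finset.sum_add_distrib, ← Finset.mul_sum, ← Finset.mul_sum,
              ← Finset.mul_sum, hpp, hpq, hqq]
            simp only [mul_zero, add_zero]
            rw [← ha]
            exact hxya
          · simp only [Fin.cons_succ]
            refine Fin.cases ?_ (fun i => ?_) j
            · simp only [Fin.cons_zero]
              have hex : ∀ i : Fin (t+1), (y * p i - x * q i) ^ 2
                  = y^2 * p i ^ 2 - (2*x*y) * (p i * q i) + x^2 * q i ^ 2 :=
                fun i => by ring
              rw [Finset.sum_congr rfl fun i _ => hex i, Finset.sum_add_distrib,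
                Finset.sum_sub_distrib, ← Finset.mul_sum, ← Finset.mul_sum,
                ← Finset.mul_sum, hpp, hpq, hqq]
              simp only [mul_zero, sub_zero]
              rw [Fin.succ_zero_eq_one, ← hb]
              exact hxyb
            · simp only [Fin.cons_succ]
              rw [Fin.sum_univ_succ]
              simp only [Fin.cons_zero, Fin.cons_succ]
              simpa [hz''] using hwn i.succ
        · intro i j
          rw [Fin.sum_univ_succ, Fin.sum_univ_succ]
          simp only [Fin.cons_zero, Fin.cons_succ]
          have key : (x*p i + y*q i)*(x*p j + y*q j) + (y*p i - x*q i)*(y*p j - x*q j)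
              = p i * p j + q i * q j := by
            linear_combination (p i * p j + q i * q j) * hxy1
          have hsplit : ∑ k : Fin (n+1), (Fin.cons (0:ℝ) (w k) : Fin (t+1) → ℝ) i * (Fin.cons (0:ℝ) (w k) : Fin (t+1) → ℝ) j
              = p i * p j + ∑ k : Fin n, (Fin.cons (0:ℝ) (w k.succ) : Fin (t+1) → ℝ) i * (Fin.cons (0:ℝ) (w k.succ) : Fin (t+1) → ℝ) j := by
            rw [Fin.sum_univ_succ, hp]
          linarith [main i j, key, hsplit]

theorem gwbe_pilot_sequences_exist (K τ : ℕ) (hK : 0 < K) (hτ : 0 < τ) (hτK : τ ≤ K)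
    (z : Fin K → ℝ) (hz : ∀ k, 0 < z k)
    (hzB : ∀ k, z k ≤ (∑ j : Fin K, z j) / (τ : ℝ)) :
    ∃ Q : Matrix (Fin τ) (Fin K) ℝ,
      (∀ k, ∑ i : Fin τ, Q i k ^ 2 = 1) ∧
      Q * Matrix.diagonal z * Qᵀ =
        ((∑ j : Fin K, z j) / (τ : ℝ)) • (1 : Matrix (Fin τ) (Fin τ) ℝ) := by
  have hS : 0 < ∑ j : Fin K, z j :=
    Finset.sum_pos (fun j _ => hz j) ⟨⟨0, hK⟩, Finset.mem_univ _⟩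
  set B := (∑ j : Fin K, z j) / (τ : ℝ) with hBdef
  have hτ' : (0:ℝ) < τ := by exact_mod_cast hτ
  have hBpos : 0 < B := div_pos hS hτ'
  have hsum : (∑ k, z k) = τ * B := by
    rw [hBdef]; field_simp
  obtain ⟨v, hvn, hvf⟩ := gwbe_aux K τ hτK B hBpos z hz hzB hsum
  set Q : Matrix (Fin τ) (Fin K) ℝ := Matrix.of (fun i k => v k i / Real.sqrt (z k)) with hQ
  have hQapp : ∀ i k, Q i k = v k i / Real.sqrt (z k) := fun i k => rfl
  refine ⟨Q, ?_, ?_⟩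
  · intro k
    have hzk := hz k
    have hs : Real.sqrt (z k) ^ 2 = z k := Real.sq_sqrt hzk.le
    simp only [hQapp]
    calc ∑ i : Fin τ, (v k i / Real.sqrt (z k)) ^ 2
        = ∑ i : Fin τ, v k i ^ 2 / z k := by
          refine Finset.sum_congr rfl fun i _ => ?_
          rw [div_pow, hs]
      _ = (∑ i : Fin τ, v k i ^ 2) / z k := by rw [Finset.sum_div]
      _ = 1 := by rw [hvn k]; field_simp
  · ext i j
    rw [Matrix.smul_apply, Matrix.one_apply]
    rw [Matrix.mul_apply]
    have hterm : ∀ k : Fin K,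
        (Q * Matrix.diagonal z) i k * Qᵀ k j = v k i * v k j := by
      intro k
      rw [Matrix.mul_diagonal, Matrix.transpose_apply, hQapp, hQapp]
      have hzk := hz k
      have hs : Real.sqrt (z k) * Real.sqrt (z k) = z k := Real.mul_self_sqrt hzk.le
      field_simp
      rw [Real.sq_sqrt hzk.le]
    rw [Finset.sum_congr rfl fun k _ => hterm k, hvf i j]
    simp [mul_ite]
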